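/- Let ε₁ ≤ … ≤ εₙ be positive reals satisfying the unsaturated condition ε_k · (Σ_{i=1}^{k−1} εᵢ) ≤ Σ_{i=1}^{k−1} εᵢ² + 8 for all 2 ≤ k ≤ n. Then (Σᵢ εᵢ² + 8)/(4 (Σᵢ εᵢ)²) ≤ 443 · H(ε), where H(ε) = max_{0 ≤ i ≤ n} 1/((Σ_{j=1}^i ε_j)² + n − i). -/

import Mathlib

set_option maxHeartbeats 1000000 in
/-- unsaturated regime: Under the unsaturated condition
`ε k * (∑_{i<k} ε i) ≤ (∑_{i<k} ε i ^ 2) + 8` for all `1 ≤ k < n` (0-indexed),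
`f(ε) = ((∑_{i<n} ε i ^ 2) + 8) / (4 (∑_{i<n} ε i)²) ≤ 443 * H(ε)` where
`H(ε) = max_{0 ≤ i ≤ n} 1 / ((∑_{j<i} ε j)² + (n - i))`. -/
theorem unsaturated_regime (n : ℕ) (hn : 1 ≤ n) (ε : ℕ → ℝ)
    (hpos : ∀ i < n, 0 < ε i)
    (hmono : ∀ i j : ℕ, i ≤ j → j < n → ε i ≤ ε j)
    (hunsat : ∀ k : ℕ, 1 ≤ k → k < n →
      ε k * (∑ i ∈ Finset.range k, ε i) ≤ (∑ i ∈ Finset.range k, (ε i) ^ 2) + 8) :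
    ((∑ i ∈ Finset.range n, (ε i) ^ 2) + 8) / (4 * (∑ i ∈ Finset.range n, ε i) ^ 2)
      ≤ 443 * (Finset.range (n + 1)).sup' Finset.nonempty_range_add_one
          (fun i => 1 / ((∑ j ∈ Finset.range i, ε j) ^ 2 + ((n - i : ℕ) : ℝ))) := by
  set S := ∑ i ∈ Finset.range n, ε i with hSdef
  set Q := ∑ i ∈ Finset.range n, (ε i) ^ 2 with hQdef
  have hSpos : 0 < S := Finset.sum_pos (fun i hi => hpos i (Finset.mem_range.mp hi))
    ⟨0, Finset.mem_range.mpr hn⟩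
  -- it suffices to beat one term of the sup
  have main : ∃ i ∈ Finset.range (n + 1),
      (Q + 8) / (4 * S ^ 2) ≤ 443 * (1 / ((∑ j ∈ Finset.range i, ε j) ^ 2 + ((n - i : ℕ) : ℝ))) := by
    by_cases hQc : Q ≤ 1764
    · -- use i = n
      refine ⟨n, Finset.mem_range.mpr (by omega), ?_⟩
      have : ((n - n : ℕ) : ℝ) = 0 := by simp
      rw [this]
      rw [mul_one_div, div_le_div_iff₀ (by positivity) (by positivity)]
      nlinarith [sq_nonneg S, mul_pos hSpos hSpos]
    · push_neg at hQc
      -- Q > 1764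
      have hQpos : (0:ℝ) < Q := by linarith
      set t : ℝ := Q / (2 * S) with htdef
      have htpos : 0 < t := by positivity
      have htQ : 2 * S * t = Q := by rw [htdef]; field_simp [hSpos.ne']
      have hεle : ∀ j < n, ε j ≤ ε (n - 1) := fun j hj =>
        hmono j (n - 1) (by omega) (by omega)
      have haS : Q ≤ ε (n - 1) * S := by
        rw [hQdef, hSdef, Finset.mul_sum]
        refine Finset.sum_le_sum fun j hj => ?_
        have hj' := Finset.mem_range.mp hj
        have := hεle j hj'
        have := (hpos j hj').le
        nlinarith
      have ha2t : 2 * t ≤ ε (n - 1) := by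
        nlinarith [haS, htQ, hSpos, htpos]
      -- sets of big indices
      have hP1ne : ((Finset.range n).filter (fun j => t ≤ ε j)).Nonempty :=
        ⟨n - 1, Finset.mem_filter.mpr ⟨Finset.mem_range.mpr (by omega), by linarith⟩⟩
      have hP2ne : ((Finset.range n).filter (fun j => 2 * t ≤ ε j)).Nonempty :=
        ⟨n - 1, Finset.mem_filter.mpr ⟨Finset.mem_range.mpr (by omega), ha2t⟩⟩
      set m := ((Finset.range n).filter (fun j => t ≤ ε j)).min' hP1ne with hmdef
      set p := ((Finset.range n).filter (fun j => 2 * t ≤ ε j)).min' hP2ne with hpdef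
      have hmmem := Finset.min'_mem _ hP1ne
      have hpmem := Finset.min'_mem _ hP2ne
      rw [← hmdef] at hmmem
      rw [← hpdef] at hpmem
      rw [Finset.mem_filter, Finset.mem_range] at hmmem hpmem
      obtain ⟨hmn, hmt⟩ := hmmem
      obtain ⟨hpn, hpt⟩ := hpmem
      have hmp : m ≤ p := Finset.min'_le _ p (Finset.mem_filter.mpr
        ⟨Finset.mem_range.mpr hpn, by linarith⟩)
      have hsmall1 : ∀ j < m, ε j < t := by
        intro j hj
        by_contra h
        push_neg at h
        have : m ≤ j := Finset.min'_le _ j (Finset.mem_filter.mpr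
          ⟨Finset.mem_range.mpr (by omega), h⟩)
        omega
      have hsmall2 : ∀ j < p, ε j < 2 * t := by
        intro j hj
        by_contra h
        push_neg at h
        have : p ≤ j := Finset.min'_le _ j (Finset.mem_filter.mpr
          ⟨Finset.mem_range.mpr (by omega), h⟩)
        omega
      set σ := ∑ j ∈ Finset.range m, ε j with hσdef
      have hσnn : 0 ≤ σ := Finset.sum_nonneg fun j hj =>
        (hpos j (lt_of_lt_of_le (Finset.mem_range.mp hj) hmn.le)).le
      -- Claim A : t * σ ≤ 8
      have claimA : t * σ ≤ 8 := by
        rcases Nat.eq_zero_or_pos p with hp0 | hp1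
        · have hm0 : m = 0 := by omega
          simp [hσdef, hm0]
        · have hcond := hunsat p hp1 hpn
          set Sp := ∑ j ∈ Finset.range p, ε j with hSpdef
          have hSpnn : 0 ≤ Sp := Finset.sum_nonneg fun j hj =>
            (hpos j (lt_of_lt_of_le (Finset.mem_range.mp hj) (by omega))).le
          have hsplit : σ + ∑ j ∈ Finset.Ico m p, ε j = Sp :=
            Finset.sum_range_add_sum_Ico ε hmp
          have hsplit2 : (∑ j ∈ Finset.range m, (ε j)^2) + ∑ j ∈ Finset.Ico m p, (ε j)^2
              = ∑ j ∈ Finset.range p, (ε j)^2 :=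
            Finset.sum_range_add_sum_Ico (fun j => (ε j)^2) hmp
          have hQp1 : ∑ j ∈ Finset.range m, (ε j)^2 ≤ t * σ := by
            rw [hσdef, Finset.mul_sum]
            refine Finset.sum_le_sum fun j hj => ?_
            have hj' := Finset.mem_range.mp hj
            have h1 := hsmall1 j hj'
            have h2 := (hpos j (by omega)).le
            nlinarith
          have hQp2 : ∑ j ∈ Finset.Ico m p, (ε j)^2 ≤ 2 * t * (Sp - σ) := by
            have : 2 * t * (Sp - σ) = ∑ j ∈ Finset.Ico m p, 2 * t * ε j := by
              rw [← Finset.mul_sum]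
              have : (∑ j ∈ Finset.Ico m p, ε j) = Sp - σ := by linarith
              rw [this]
            rw [this]
            refine Finset.sum_le_sum fun j hj => ?_
            obtain ⟨hj1, hj2⟩ := Finset.mem_Ico.mp hj
            have h1 := hsmall2 j hj2
            have h2 := (hpos j (by omega)).le
            nlinarith
          have h2tp : 2 * t * Sp ≤ ε p * Sp := by nlinarith
          nlinarith
      -- Claim B : (n - m) * t ≤ S
      have claimB : ((n - m : ℕ) : ℝ) * t ≤ S := by
        have h1 : ∑ j ∈ Finset.Ico m n, t ≤ ∑ j ∈ Finset.Ico m n, ε j := by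
          refine Finset.sum_le_sum fun j hj => ?_
          obtain ⟨hj1, hj2⟩ := Finset.mem_Ico.mp hj
          exact le_trans hmt (hmono m j hj1 hj2)
        have h2 : σ + ∑ j ∈ Finset.Ico m n, ε j = S :=
          Finset.sum_range_add_sum_Ico ε (by omega)
        have h3 : ∑ j ∈ Finset.Ico m n, t = ((n - m : ℕ) : ℝ) * t := by
          rw [Finset.sum_const, Nat.card_Ico, nsmul_eq_mul]
        linarith
      -- finish with index m
      clear hsmall1 hsmall2 hεle haS ha2t hmt hpt hunsat hmono hpos
      refine ⟨m, Finset.mem_range.mpr (by omega), ?_⟩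
      rw [show (∑ j ∈ Finset.range m, ε j) = σ from hσdef.symm]
      clear_value σ m p t Q S
      clear hσdef hmdef hpdef htdef hQdef hSdef hP1ne hP2ne
      have hk1 : (1:ℝ) ≤ ((n - m : ℕ) : ℝ) := by
        have : 1 ≤ n - m := by omega
        exact_mod_cast this
      set k : ℝ := ((n - m : ℕ) : ℝ) with hkdef
      have hDpos : 0 < σ ^ 2 + k := by nlinarith [sq_nonneg σ]
      rw [mul_one_div, div_le_div_iff₀ (by positivity) hDpos]
      -- key facts: Q = 2*S*t, t*σ ≤ 8, k*t ≤ S, Q > 1764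
      have h1 : Q * σ ≤ 16 * S := by nlinarith [mul_le_mul_of_nonneg_left claimA hSpos.le]
      have h2 : Q * k ≤ 2 * S ^ 2 := by nlinarith [mul_le_mul_of_nonneg_left claimB hSpos.le]
      have h3 : 1764 * σ ≤ 16 * S := by nlinarith [mul_le_mul_of_nonneg_right hQc.le hσnn]
      have h4 : Q * σ * σ ≤ 16 * S * σ := mul_le_mul_of_nonneg_right h1 hσnn
      have h5 : (1764 * σ) * (1764 * σ) ≤ (16 * S) * (16 * S) :=
        mul_le_mul h3 h3 (by positivity) (by positivity)
      have h6 : 1764 * (S * σ) ≤ 16 * S ^ 2 := by nlinarith [mul_le_mul_of_nonneg_left h3 hSpos.le]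
      nlinarith [sq_nonneg S, sq_nonneg σ, hk1, hQc, h2, h4, h6, mul_pos hSpos hSpos]
  obtain ⟨i, hi, hle⟩ := main
  refine hle.trans ?_
  have := Finset.le_sup' (fun i => 1 / ((∑ j ∈ Finset.range i, ε j) ^ 2 + ((n - i : ℕ) : ℝ))) hi
  exact mul_le_mul_of_nonneg_left this (by norm_num)
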